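/- The real weak value solves the post-measurement GCE equation (Eq. (47) of the paper): let ρ̄ be a density matrix, B₁ a Hermitian matrix on the same space, Y a finite outcome set, and (M_y)_{y∈Y} a POVM with tr(M_y·ρ̄) > 0 for every y. Define the real weak value b(y) = Re tr(M_y·B₁·ρ̄)/tr(M_y·ρ̄) and set B = Σ_y b(y)·e_y e_yᴴ. Then B solves the Jordan GCE equation for (ρ̄, G, B₁), i.e. (G(ρ̄)·B + B·G(ρ̄))/2 = G((ρ̄·B₁ + B₁·ρ̄)/2), where G is the measurement channel of the POVM. -/

import Mathlib

open Matrix BigOperators ComplexOrder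

noncomputable section

/-- A density matrix: positive semidefinite (hence Hermitian) with unit trace. -/
def IsDensity {d : Type*} [Fintype d] [DecidableEq d] (ρ : Matrix d d ℂ) : Prop :=
  ρ.PosSemidef ∧ ρ.trace = 1

/-- The Jordan-product map `E_ρ(A) = (ρA + Aρ)/2`. -/
def jordan {d : Type*} [Fintype d] (ρ A : Matrix d d ℂ) : Matrix d d ℂ :=
  ((1 : ℂ)/2) • (ρ * A + A * ρ)

/-- The weighted squared norm `‖A‖²_ρ = Re tr(A² ρ)`. -/
def nsq {d : Type*} [Fintype d] (ρ A : Matrix d d ℂ) : ℝ :=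
  (Matrix.trace (A * A * ρ)).re

/-- The channel `F(X) = Σ_i K_i X K_iᴴ` determined by a Kraus family. -/
def krausMap {n m ι : Type*} [Fintype n] [Fintype m] [Fintype ι]
    (K : ι → Matrix m n ℂ) (X : Matrix n n ℂ) : Matrix m m ℂ :=
  ∑ i, K i * X * (K i)ᴴ

/-- The Hilbert–Schmidt adjoint `F*(Y) = Σ_i K_iᴴ Y K_i`. -/
def krausAdj {n m ι : Type*} [Fintype n] [Fintype m] [Fintype ι]
    (K : ι → Matrix m n ℂ) (Y : Matrix m m ℂ) : Matrix n n ℂ :=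
  ∑ i, (K i)ᴴ * Y * K i

/-- Trace preservation: `Σ_i K_iᴴ K_i = 1`. -/
def TracePreserving {n m ι : Type*} [Fintype n] [DecidableEq n] [Fintype m] [Fintype ι]
    (K : ι → Matrix m n ℂ) : Prop :=
  ∑ i, (K i)ᴴ * K i = 1

/-- The divergence `D_{σ,F}(A,B) = ‖A‖²_σ − 2 Re tr(F*(B)·E_σ(A)) + ‖B‖²_{F(σ)}`. -/
def Dvg {n m ι : Type*} [Fintype n] [Fintype m] [Fintype ι]
    (σ : Matrix n n ℂ) (K : ι → Matrix m n ℂ) (A : Matrix n n ℂ) (B : Matrix m m ℂ) : ℝ :=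
  nsq σ A - 2 * (Matrix.trace (krausAdj K B * jordan σ A)).re + nsq (krausMap K σ) B

/-- `B` solves the Jordan GCE equation for `(σ, F, A)`: `E_{F(σ)}(B) = F(E_σ(A))`. -/
def SolvesGCE {n m ι : Type*} [Fintype n] [Fintype m] [Fintype ι]
    (σ : Matrix n n ℂ) (K : ι → Matrix m n ℂ) (A : Matrix n n ℂ) (B : Matrix m m ℂ) : Prop :=
  jordan (krausMap K σ) B = krausMap K (jordan σ A)

/-- The measurement channel of a POVM `(M_y)`: `G(τ) = Σ_y tr(M_y τ) e_y e_yᴴ`. -/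
def povmChannel {d Y : Type*} [Fintype d] [Fintype Y] [DecidableEq Y]
    (M : Y → Matrix d d ℂ) (τ : Matrix d d ℂ) : Matrix Y Y ℂ :=
  ∑ y, Matrix.trace (M y * τ) • Matrix.single y y (1 : ℂ)

/-- The real weak value solves the post-measurement GCE equation. -/
theorem weak_value_solves_gce {d Y : Type*} [Fintype d] [DecidableEq d]
    [Fintype Y] [DecidableEq Y]
    (ρbar : Matrix d d ℂ) (hρ : IsDensity ρbar)
    (B₁ : Matrix d d ℂ) (hB₁ : B₁.IsHermitian)
    (M : Y → Matrix d d ℂ) (hMpos : ∀ y, (M y).PosSemidef) (hMsum : ∑ y, M y = 1)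
    (hMtr : ∀ y, 0 < (Matrix.trace (M y * ρbar)).re)
    (b : Y → ℝ)
    (hb : ∀ y, b y = (Matrix.trace (M y * B₁ * ρbar)).re / (Matrix.trace (M y * ρbar)).re)
    (B : Matrix Y Y ℂ)
    (hB : B = ∑ y, ((b y : ℂ)) • Matrix.single y y (1 : ℂ)) :
    jordan (povmChannel M ρbar) B = povmChannel M (jordan ρbar B₁) := by
  classical
  have hdiag : ∀ (c : Y → ℂ), (∑ y, c y • Matrix.single y y (1:ℂ))
      = Matrix.diagonal c := by
    intro c
    ext i j
    simp only [Matrix.sum_apply, Matrix.smul_apply, Matrix.single, Matrix.of_apply,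
      smul_eq_mul, mul_ite, mul_one, mul_zero, Matrix.diagonal_apply]
    by_cases h : i = j
    · subst h; simp
    · rw [if_neg h]
      exact Finset.sum_eq_zero fun x _ => if_neg (by rintro ⟨rfl, rfl⟩; exact h rfl)
  have hρH : ρbar.IsHermitian := hρ.1.1
  have htreal : ∀ y, Matrix.trace (M y * ρbar)
      = ((Matrix.trace (M y * ρbar)).re : ℂ) := by
    intro y
    have hst : (starRingEnd ℂ) (Matrix.trace (M y * ρbar)) = Matrix.trace (M y * ρbar) := by
      calc (starRingEnd ℂ) (Matrix.trace (M y * ρbar))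
          = Matrix.trace ((M y * ρbar)ᴴ) := (Matrix.trace_conjTranspose _).symm
        _ = Matrix.trace (ρbar * M y) := by
            rw [Matrix.conjTranspose_mul, (hMpos y).1.eq, hρH.eq]
        _ = Matrix.trace (M y * ρbar) := Matrix.trace_mul_comm _ _
    exact (Complex.conj_eq_iff_re.mp hst).symm
  have key : ∀ y, (b y : ℂ) * Matrix.trace (M y * ρbar)
      = Matrix.trace (M y * jordan ρbar B₁) := by
    intro y
    have hconj : Matrix.trace (M y * (ρbar * B₁))
        = (starRingEnd ℂ) (Matrix.trace (M y * (B₁ * ρbar))) := by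
      calc Matrix.trace (M y * (ρbar * B₁))
          = Matrix.trace (M y * (ρbar * B₁)) := rfl
        _ = Matrix.trace ((M y * (B₁ * ρbar))ᴴ) := by
            rw [Matrix.conjTranspose_mul, Matrix.conjTranspose_mul, (hMpos y).1.eq,
              hρH.eq, hB₁.eq, Matrix.trace_mul_comm, Matrix.mul_assoc]
        _ = (starRingEnd ℂ) (Matrix.trace (M y * (B₁ * ρbar))) :=
            Matrix.trace_conjTranspose _
    have hsum : Matrix.trace (M y * (ρbar * B₁)) + Matrix.trace (M y * (B₁ * ρbar))
        = ((2 * (Matrix.trace (M y * B₁ * ρbar)).re : ℝ) : ℂ) := by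
      rw [hconj, add_comm, ← Matrix.mul_assoc, Complex.add_conj]
    have hjord : Matrix.trace (M y * jordan ρbar B₁)
        = ((1:ℂ)/2) * (Matrix.trace (M y * (ρbar * B₁)) + Matrix.trace (M y * (B₁ * ρbar))) := by
      simp only [jordan, Matrix.mul_smul, Matrix.trace_smul, Matrix.mul_add,
        Matrix.trace_add, smul_eq_mul]
    rw [hjord, hsum, hb y, htreal y]
    have hne : ((Matrix.trace (M y * ρbar)).re : ℂ) ≠ 0 := by
      exact_mod_cast (hMtr y).ne'
    push_cast [Complex.ofReal_re]
    field_simp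
  subst hB
  rw [hdiag]
  unfold povmChannel
  rw [hdiag, hdiag]
  ext i j
  by_cases h : i = j
  · subst h
    simp only [jordan, Matrix.diagonal_mul_diagonal, Matrix.smul_apply, Matrix.add_apply,
      Matrix.diagonal_apply_eq, smul_eq_mul]
    rw [show ((1:ℂ)/2) • (ρbar * B₁ + B₁ * ρbar) = jordan ρbar B₁ from rfl, ← key i]
    ring
  · simp [jordan, Matrix.diagonal_mul_diagonal, Matrix.diagonal_apply_ne _ h]
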